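/- arXiv:1204.3275 — 3 statements merged into one kernel-verified Lean document; each statement's English description precedes it below -/
import Mathlib

section
/- Let (Ω,𝔉_T,P) be a probability space. Let X be a separable Banach space and Y a reflexive Banach space, and assume that the scalar space L^p(Ω,𝔉_T,P) is separable for one (equivalently, every) p ∈ [1,∞). Let 1 ≤ p₁ < ∞ and 1 < q₁ < ∞. Then the set ℒ_pd(L^{p₁}(Ω,𝔉_T,P;X), L^{q₁}(Ω,𝔉_T,P;Y)) of all pointwisely defined bounded linear operators from L^{p₁}(Ω,𝔉_T,P;X) to L^{q₁}(Ω,𝔉_T,P;Y) is a closed linear subspace of the Banach space ℒ(L^{p₁}(Ω,𝔉_T,P;X), L^{q₁}(Ω,𝔉_T,P;Y)) of all bounded linear operators, equipped with the operator norm. In particular, if a sequence of pointwisely defined bounded linear operators converges in operator norm to a bounded linear operator 𝒢, then 𝒢 is pointwisely defined. -/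
open MeasureTheory Filter Topology
open scoped ENNReal

noncomputable section

/-- A bounded linear operator `𝒢 : L^{p₁}(Ω;X) → L^{q₁}(Ω;Y)` is *pointwisely defined*
if there is a family of operators `G ω ∈ ℒ(X,Y)` such that `(𝒢 u)(ω) = G ω (u ω)`
for a.e. `ω` and every `u`. -/
def PointwiselyDefined {Ω : Type*} [MeasurableSpace Ω] (P : Measure Ω)
    {X Y : Type*} [NormedAddCommGroup X] [NormedSpace ℝ X]
    [NormedAddCommGroup Y] [NormedSpace ℝ Y]
    (p₁ q₁ : ℝ≥0∞) [Fact (1 ≤ p₁)] [Fact (1 ≤ q₁)]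
    (𝒢 : Lp X p₁ P →L[ℝ] Lp Y q₁ P) : Prop :=
  ∃ G : Ω → X →L[ℝ] Y, ∀ u : Lp X p₁ P, ∀ᵐ ω ∂P, (𝒢 u) ω = G ω (u ω)

section Aux

variable {Ω : Type*} [MeasurableSpace Ω] {P : Measure Ω} [IsProbabilityMeasure P]
  {X Y : Type*} [NormedAddCommGroup X] [NormedSpace ℝ X]
  [TopologicalSpace.SeparableSpace X]
  [NormedAddCommGroup Y] [NormedSpace ℝ Y]
  {p₁ q₁ : ℝ≥0∞} [Fact (1 ≤ p₁)] [Fact (1 ≤ q₁)]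

lemma pd_key (hp₁ : p₁ ≠ ⊤) (hq₁' : q₁ ≠ ⊤)
    (𝒢 : Lp X p₁ P →L[ℝ] Lp Y q₁ P) (H : Ω → X →L[ℝ] Y)
    (hH : ∀ u : Lp X p₁ P, ∀ᵐ ω ∂P, (𝒢 u) ω = H ω (u ω))
    {ε δ : ℝ} (hε : 0 < ε) (hδ : 0 < δ)
    (hnorm : ‖𝒢‖ < ε * δ ^ (1 / q₁.toReal)) :
    ∃ A : Set Ω, MeasurableSet A ∧ P A ≤ ENNReal.ofReal δ ∧
      ∀ᵐ ω ∂P, ω ∉ A → ‖H ω‖ ≤ ε := by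
  have hq0 : q₁ ≠ 0 := (lt_of_lt_of_le zero_lt_one (Fact.out : 1 ≤ q₁)).ne'
  have hp0 : p₁ ≠ 0 := (lt_of_lt_of_le zero_lt_one (Fact.out : 1 ≤ p₁)).ne'
  have hqr : 0 < q₁.toReal := ENNReal.toReal_pos hq0 hq₁'
  have hpr : 0 < p₁.toReal := ENNReal.toReal_pos hp0 hp₁
  by_cases hδ1 : 1 ≤ δ
  · refine ⟨Set.univ, MeasurableSet.univ, ?_, ?_⟩
    · rw [measure_univ]; exact ENNReal.one_le_ofReal.mpr hδ1
    · filter_upwards with ω hω; exact absurd (Set.mem_univ ω) hω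
  push_neg at hδ1
  borelize X
  haveI : Nonempty X := ⟨0⟩
  obtain ⟨x, hx⟩ := TopologicalSpace.exists_dense_seq X
  -- constant functions in Lp
  set c : ℕ → Lp X p₁ P := fun i => (memLp_const (x i)).toLp _ with hc
  -- measurable versions of ω ↦ H ω (x i)
  set g : ℕ → Ω → Y := fun i => (Lp.aestronglyMeasurable (𝒢 (c i))).mk _ with hgdef
  have hgsm : ∀ i, StronglyMeasurable (g i) :=
    fun i => (Lp.aestronglyMeasurable (𝒢 (c i))).stronglyMeasurable_mk
  have hgH : ∀ i, ∀ᵐ ω ∂P, g i ω = H ω (x i) := by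
    intro i
    filter_upwards [(Lp.aestronglyMeasurable (𝒢 (c i))).ae_eq_mk, hH (c i),
      (memLp_const (x i)).coeFn_toLp] with ω h1 h2 h3
    simp only [hgdef]
    rw [← h1, h2, h3]
  set Q : ℕ → Set Ω := fun i => {ω | ε * ‖x i‖ < ‖g i ω‖} with hQ
  have hQm : ∀ i, MeasurableSet (Q i) := by
    intro i
    exact measurableSet_lt measurable_const (hgsm i).norm.measurable
  set A : Set Ω := ⋃ i, Q i with hA
  have hAm : MeasurableSet A := MeasurableSet.iUnion hQm
  classical
  set j : Ω → ℕ := fun ω => if h : ∃ i, ω ∈ Q i then Nat.find h + 1 else 0 with hj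
  have hjm : Measurable j := by
    apply measurable_to_countable'
    intro m
    match m with
    | 0 =>
      have : j ⁻¹' {0} = Aᶜ := by
        ext ω
        simp only [Set.mem_preimage, Set.mem_singleton_iff, hj, Set.mem_compl_iff, hA,
          Set.mem_iUnion]
        by_cases h : ∃ i, ω ∈ Q i
        · simp [h]
        · simp [h]
      rw [this]; exact hAm.compl
    | (i+1) =>
      have : j ⁻¹' {i+1} = Q i ∩ ⋂ (l) (_ : l < i), (Q l)ᶜ := by
        ext ω
        simp only [Set.mem_preimage, Set.mem_singleton_iff, hj, Set.mem_inter_iff,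
          Set.mem_iInter, Set.mem_compl_iff]
        by_cases h : ∃ i, ω ∈ Q i
        · rw [dif_pos h]
          constructor
          · intro he
            have := Nat.find_eq_iff (m := i) h |>.mp (by omega)
            exact ⟨this.1, fun l hl => this.2 l hl⟩
          · intro ⟨h1, h2⟩
            have : Nat.find h = i := (Nat.find_eq_iff h).mpr ⟨h1, fun l hl => h2 l hl⟩
            omega
        · rw [dif_neg h]
          push_neg at h
          exact ⟨fun he => by omega, fun ⟨h1, _⟩ => absurd h1 (h i)⟩
      rw [this]
      exact (hQm i).inter (MeasurableSet.iInter fun l => MeasurableSet.iInter fun _ =>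
        (hQm l).compl)
  set w : ℕ → X := fun m => match m with
    | 0 => 0
    | (i+1) => ‖x i‖⁻¹ • x i with hw
  have hwnorm : ∀ m, ‖w m‖ ≤ 1 := by
    intro m
    match m with
    | 0 => simp [hw]
    | (i+1) =>
      rcases eq_or_ne (x i) 0 with h | h
      · simp [hw, h]
      · simp only [hw, norm_smul, norm_inv, norm_norm]
        rw [inv_mul_cancel₀ (norm_ne_zero_iff.mpr h)]
  set u : Ω → X := fun ω => w (j ω) with hu
  have hum : Measurable u := Measurable.comp (measurable_from_top : Measurable w) hjm
  haveI : SecondCountableTopology X := UniformSpace.secondCountable_of_separable X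
  have husm : StronglyMeasurable u := hum.stronglyMeasurable
  have humem : MemLp u p₁ P :=
    MemLp.of_bound husm.aestronglyMeasurable 1 (ae_of_all _ fun ω => hwnorm (j ω))
  set U : Lp X p₁ P := humem.toLp u with hU
  have hmain : ∀ᵐ ω ∂P, (ω ∈ A → ε ≤ ‖(𝒢 U : Ω → Y) ω‖) ∧
      (ω ∉ A → ∀ i, ‖H ω (x i)‖ ≤ ε * ‖x i‖) := by
    filter_upwards [hH U, humem.coeFn_toLp, ae_all_iff.2 hgH] with ω h1 h2 h3
    constructor
    · intro hωA
      have hex : ∃ i, ω ∈ Q i := Set.mem_iUnion.mp hωA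
      set i := Nat.find hex with hi
      have hQi : ω ∈ Q i := Nat.find_spec hex
      have hji : j ω = i + 1 := by rw [hj]; simp only [dif_pos hex, hi]
      have hgi : ε * ‖x i‖ < ‖H ω (x i)‖ := by rw [← h3 i]; exact hQi
      have hxi : x i ≠ 0 := by
        intro h0
        rw [h0] at hgi
        simp only [norm_zero, mul_zero, map_zero] at hgi
        exact lt_irrefl _ hgi
      have hxn : 0 < ‖x i‖ := norm_pos_iff.mpr hxi
      have huω : u ω = ‖x i‖⁻¹ • x i := by rw [hu]; simp only [hji, hw]
      have hGUω : (𝒢 U : Ω → Y) ω = H ω (u ω) := by rw [h1, h2]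
      rw [hGUω, huω, _root_.map_smul, norm_smul, norm_inv, norm_norm]
      calc ε = ‖x i‖⁻¹ * (ε * ‖x i‖) := by field_simp
        _ ≤ ‖x i‖⁻¹ * ‖H ω (x i)‖ :=
          mul_le_mul_of_nonneg_left hgi.le (inv_nonneg.mpr (norm_nonneg _))
    · intro hωA i
      by_cases h0 : x i = 0
      · simp [h0]
      have hnQ : ω ∉ Q i := fun hq => hωA (Set.mem_iUnion.mpr ⟨i, hq⟩)
      rw [hQ] at hnQ
      simp only [Set.mem_setOf_eq, not_lt] at hnQ
      rw [h3 i] at hnQ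
      exact hnQ
  -- lower bound
  have hGU_lower : ENNReal.ofReal ε * P A ^ (1 / q₁.toReal) ≤ ENNReal.ofReal ‖𝒢 U‖ := by
    have h1 : eLpNorm (A.indicator fun _ => ε) q₁ P ≤ eLpNorm (𝒢 U : Ω → Y) q₁ P := by
      apply eLpNorm_mono_ae
      filter_upwards [hmain] with ω hω
      by_cases hωA : ω ∈ A
      · rw [Set.indicator_of_mem hωA]
        calc ‖ε‖ = ε := by rw [Real.norm_eq_abs, abs_of_pos hε]
          _ ≤ ‖(𝒢 U : Ω → Y) ω‖ := hω.1 hωA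
      · rw [Set.indicator_of_notMem hωA]; simp
    rw [eLpNorm_indicator_const hAm hq0 hq₁'] at h1
    have h2 : eLpNorm (𝒢 U : Ω → Y) q₁ P = ENNReal.ofReal ‖𝒢 U‖ := by
      rw [Lp.norm_def, ENNReal.ofReal_toReal (Lp.eLpNorm_ne_top _)]
    rw [h2] at h1
    refine le_trans (le_of_eq ?_) h1
    congr 1
    rw [← ofReal_norm, Real.norm_eq_abs, abs_of_pos hε]
  -- upper bound
  have hU_upper : ‖U‖ ≤ ((P A).toReal) ^ (1 / p₁.toReal) := by
    have h2 : eLpNorm u p₁ P ≤ eLpNorm (A.indicator fun _ => (1 : ℝ)) p₁ P := by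
      apply eLpNorm_mono
      intro ω
      by_cases hωA : ω ∈ A
      · rw [Set.indicator_of_mem hωA]
        simpa using hwnorm (j ω)
      · have hnex : ¬∃ i, ω ∈ Q i := fun hex => hωA (Set.mem_iUnion.mpr hex)
        have hj0 : j ω = 0 := by rw [hj]; simp [dif_neg hnex]
        rw [Set.indicator_of_notMem hωA]
        simp [hu, hj0, hw]
    rw [eLpNorm_indicator_const hAm hp0 hp₁] at h2
    have hnU : ‖U‖ = (eLpNorm u p₁ P).toReal := by
      rw [Lp.norm_def, eLpNorm_congr_ae humem.coeFn_toLp]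
    rw [hnU]
    have hfin : (‖(1 : ℝ)‖₊ : ℝ≥0∞) * P A ^ (1 / p₁.toReal) ≠ ⊤ := by
      apply ENNReal.mul_ne_top (by simp)
      exact (ENNReal.rpow_lt_top_of_nonneg (by positivity)
        (measure_ne_top P A)).ne
    have := ENNReal.toReal_mono hfin h2
    rwa [ENNReal.toReal_mul, ← ENNReal.toReal_rpow, nnnorm_one, ENNReal.coe_one,
      ENNReal.toReal_one, one_mul] at this
  set a := (P A).toReal with hadef
  have ha0 : (0 : ℝ) ≤ a := ENNReal.toReal_nonneg
  have ha1 : a ≤ 1 := by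
    have := ENNReal.toReal_mono (measure_ne_top P Set.univ)
      (measure_mono (Set.subset_univ A))
    simpa [measure_univ] using this
  have hkey : ε * a ^ (1 / q₁.toReal) ≤ ‖𝒢‖ * a ^ (1 / p₁.toReal) := by
    have hL : ε * a ^ (1 / q₁.toReal) ≤ ‖𝒢 U‖ := by
      have := ENNReal.toReal_mono ENNReal.ofReal_ne_top hGU_lower
      rwa [ENNReal.toReal_mul, ENNReal.toReal_ofReal hε.le, ← ENNReal.toReal_rpow,
        ENNReal.toReal_ofReal (norm_nonneg _)] at this
    have hR : ‖𝒢 U‖ ≤ ‖𝒢‖ * a ^ (1 / p₁.toReal) :=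
      le_trans (𝒢.le_opNorm U) (mul_le_mul_of_nonneg_left hU_upper (norm_nonneg 𝒢))
    linarith
  have haδ : a ≤ δ := by
    by_contra hcon
    push_neg at hcon
    have h1 : δ ^ (1 / q₁.toReal) < a ^ (1 / q₁.toReal) :=
      Real.rpow_lt_rpow hδ.le hcon (by positivity)
    have h2 : a ^ (1 / p₁.toReal) ≤ 1 := Real.rpow_le_one ha0 ha1 (by positivity)
    have c1 : ε * δ ^ (1 / q₁.toReal) < ε * a ^ (1 / q₁.toReal) :=
      mul_lt_mul_of_pos_left h1 hε
    have c2 : ‖𝒢‖ * a ^ (1 / p₁.toReal) ≤ ‖𝒢‖ :=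
      le_trans (mul_le_mul_of_nonneg_left h2 (norm_nonneg 𝒢)) (le_of_eq (mul_one _))
    linarith
  refine ⟨A, hAm, ?_, ?_⟩
  · rw [← ENNReal.ofReal_toReal (measure_ne_top P A)]
    exact ENNReal.ofReal_le_ofReal haδ
  · filter_upwards [hmain] with ω hω hωA
    have hb := hω.2 hωA
    apply (H ω).opNorm_le_bound hε.le
    intro y
    have hcl : IsClosed {z : X | ‖H ω z‖ ≤ ε * ‖z‖} :=
      isClosed_le ((H ω).continuous.norm) (continuous_const.mul continuous_norm)
    have hsub : Set.range x ⊆ {z : X | ‖H ω z‖ ≤ ε * ‖z‖} := by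
      rintro _ ⟨i, rfl⟩; exact hb i
    have hall : Set.univ ⊆ {z : X | ‖H ω z‖ ≤ ε * ‖z‖} := by
      rw [← hx.closure_eq]
      exact hcl.closure_subset_iff.mpr hsub
    exact hall (Set.mem_univ y)

lemma pd_limit [CompleteSpace Y] (hp₁ : p₁ ≠ ⊤) (hq₁' : q₁ ≠ ⊤)
    (𝒢seq : ℕ → (Lp X p₁ P →L[ℝ] Lp Y q₁ P)) (𝒢 : Lp X p₁ P →L[ℝ] Lp Y q₁ P)
    (hpd : ∀ n, PointwiselyDefined P p₁ q₁ (𝒢seq n))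
    (hconv : Tendsto 𝒢seq atTop (𝓝 𝒢)) :
    PointwiselyDefined P p₁ q₁ 𝒢 := by
  have hq0 : q₁ ≠ 0 := (lt_of_lt_of_le zero_lt_one (Fact.out : 1 ≤ q₁)).ne'
  have hqr : 0 < q₁.toReal := ENNReal.toReal_pos hq0 hq₁'
  classical
  choose Gf hGf using hpd
  -- the sequence of tolerances
  set r : ℕ → ℝ := fun k => (1 / 2 : ℝ) ^ k with hr
  have hr_pos : ∀ k, 0 < r k := fun k => by positivity
  set b : ℕ → ℝ := fun k => min (r k) (r k * r k ^ (1 / q₁.toReal)) with hb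
  have hb_pos : ∀ k, 0 < b k := fun k =>
    lt_min (hr_pos k) (mul_pos (hr_pos k) (Real.rpow_pos_of_pos (hr_pos k) _))
  have hr_anti : ∀ k, r (k + 1) ≤ r k := fun k =>
    pow_le_pow_of_le_one (by norm_num) (by norm_num) (Nat.le_succ k)
  have hb_anti : ∀ k, b (k + 1) ≤ b k := by
    intro k
    apply min_le_min (hr_anti k)
    apply mul_le_mul (hr_anti k) _ (Real.rpow_nonneg (hr_pos (k + 1)).le _) (hr_pos k).le
    exact Real.rpow_le_rpow (hr_pos (k + 1)).le (hr_anti k) (by positivity)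
  -- choose a subsequence
  have hchoice : ∀ k : ℕ, ∃ N : ℕ, dist (𝒢seq N) 𝒢 < b k / 2 := by
    intro k
    obtain ⟨N, hN⟩ := Metric.tendsto_atTop.mp hconv (b k / 2) (half_pos (hb_pos k))
    exact ⟨N, hN N le_rfl⟩
  choose n hn using hchoice
  have hdiff : ∀ k, ‖𝒢seq (n (k + 1)) - 𝒢seq (n k)‖ < b k := by
    intro k
    rw [← dist_eq_norm]
    calc dist (𝒢seq (n (k + 1))) (𝒢seq (n k))
        ≤ dist (𝒢seq (n (k + 1))) 𝒢 + dist 𝒢 (𝒢seq (n k)) := dist_triangle _ _ _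
      _ < b (k + 1) / 2 + b k / 2 := by
          rw [dist_comm 𝒢]
          exact add_lt_add (hn (k + 1)) (hn k)
      _ ≤ b k / 2 + b k / 2 := by linarith [hb_anti k]
      _ = b k := by ring
  -- apply the key lemma to consecutive differences
  have hkey : ∀ k : ℕ, ∃ A : Set Ω, MeasurableSet A ∧ P A ≤ ENNReal.ofReal (r k) ∧
      ∀ᵐ ω ∂P, ω ∉ A → ‖(Gf (n (k + 1)) ω - Gf (n k) ω : X →L[ℝ] Y)‖ ≤ r k := by
    intro k
    apply pd_key hp₁ hq₁' (𝒢seq (n (k + 1)) - 𝒢seq (n k))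
      (fun ω => Gf (n (k + 1)) ω - Gf (n k) ω) ?_ (hr_pos k) (hr_pos k)
      (lt_of_lt_of_le (hdiff k) (min_le_right _ _))
    intro u
    filter_upwards [hGf (n (k + 1)) u, hGf (n k) u,
      Lp.coeFn_sub (𝒢seq (n (k + 1)) u) (𝒢seq (n k) u)] with ω h1 h2 h3
    rw [ContinuousLinearMap.sub_apply, h3]
    simp only [Pi.sub_apply, h1, h2, ContinuousLinearMap.sub_apply]
  choose A hAm hAP hAe using hkey
  -- Borel–Cantelli
  have hsum : ∑' k, P (A k) ≠ ∞ := by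
    apply ne_top_of_le_ne_top (b := ∑' k, ENNReal.ofReal (r k))
    · have : ∀ k, ENNReal.ofReal (r k) = ENNReal.ofReal (1 / 2) ^ k := by
        intro k
        rw [hr, ENNReal.ofReal_pow (by norm_num)]
      rw [tsum_congr this, ENNReal.tsum_geometric]
      apply ENNReal.inv_ne_top.mpr
      intro h0
      have h12 : ENNReal.ofReal (1 / 2 : ℝ) < 1 := by
        rw [ENNReal.ofReal_lt_one]; norm_num
      rw [tsub_eq_zero_iff_le] at h0
      exact absurd h0 (not_le.mpr h12)
    · exact ENNReal.tsum_le_tsum hAP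
  have hBC : P (limsup A atTop) = 0 := measure_limsup_atTop_eq_zero hsum
  have hae_not : ∀ᵐ ω ∂P, ∀ᶠ k in atTop, ω ∉ A k := by
    have : ∀ᵐ ω ∂P, ω ∉ limsup A atTop := by
      rw [MeasureTheory.ae_iff]
      simpa using hBC
    filter_upwards [this] with ω hω
    rw [mem_limsup_iff_frequently_mem] at hω
    exact not_frequently.mp hω
  -- a.e. Cauchy
  have hCauchy : ∀ᵐ ω ∂P, ∃ L : X →L[ℝ] Y,
      Tendsto (fun k => Gf (n k) ω) atTop (𝓝 L) := by
    filter_upwards [hae_not, ae_all_iff.2 hAe] with ω h1 h2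
    apply cauchySeq_tendsto_of_complete
    apply cauchySeq_of_summable_dist
    obtain ⟨K, hK⟩ := eventually_atTop.mp h1
    rw [← summable_nat_add_iff K]
    refine Summable.of_nonneg_of_le (fun k => dist_nonneg)
      (f := fun k => (1 / 2 : ℝ) ^ (k + K)) (fun k => ?_) ?_
    · rw [dist_eq_norm, ← neg_sub, norm_neg]
      exact h2 (k + K) (hK (k + K) (Nat.le_add_left K k))
    · have heq2 : (fun k : ℕ => (1 / 2 : ℝ) ^ (k + K)) =
          fun k : ℕ => (1 / 2 : ℝ) ^ k * (1 / 2 : ℝ) ^ K := by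
        funext k; rw [pow_add]
      rw [heq2]
      exact (summable_geometric_of_lt_one (by norm_num) (by norm_num)).mul_right _
  set G : Ω → X →L[ℝ] Y := fun ω =>
    if h : ∃ L : X →L[ℝ] Y, Tendsto (fun k => Gf (n k) ω) atTop (𝓝 L)
    then h.choose else 0 with hG
  have hGlim : ∀ᵐ ω ∂P, Tendsto (fun k => Gf (n k) ω) atTop (𝓝 (G ω)) := by
    filter_upwards [hCauchy] with ω hω
    rw [hG]; simp only [dif_pos hω]
    exact hω.choose_spec
  refine ⟨G, fun u => ?_⟩
  -- convergence in Lp norm of the subsequence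
  have hnconv : Tendsto (fun k => ‖𝒢seq (n k) u - 𝒢 u‖) atTop (𝓝 0) := by
    apply squeeze_zero (fun k => norm_nonneg _) (g := fun k => b k / 2 * ‖u‖)
    · intro k
      calc ‖𝒢seq (n k) u - 𝒢 u‖ = ‖(𝒢seq (n k) - 𝒢) u‖ := by
            rw [ContinuousLinearMap.sub_apply]
        _ ≤ ‖𝒢seq (n k) - 𝒢‖ * ‖u‖ := (𝒢seq (n k) - 𝒢).le_opNorm u
        _ ≤ b k / 2 * ‖u‖ := by
            apply mul_le_mul_of_nonneg_right _ (norm_nonneg u)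
            rw [← dist_eq_norm]
            exact (hn k).le
    · have hb0 : Tendsto (fun k => b k / 2 * ‖u‖) atTop (𝓝 (0 / 2 * ‖u‖)) := by
        apply Tendsto.mul_const
        apply Tendsto.div_const
        apply squeeze_zero (fun k => (hb_pos k).le) (fun k => min_le_left _ _)
        exact tendsto_pow_atTop_nhds_zero_of_lt_one (by norm_num) (by norm_num)
      simpa using hb0
  have heLp : Tendsto (fun k => eLpNorm ((𝒢seq (n k) u : Ω → Y) - (𝒢 u : Ω → Y)) q₁ P)
      atTop (𝓝 0) := by
    have heq : ∀ k, eLpNorm ((𝒢seq (n k) u : Ω → Y) - (𝒢 u : Ω → Y)) q₁ P =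
        ENNReal.ofReal ‖𝒢seq (n k) u - 𝒢 u‖ := by
      intro k
      rw [← eLpNorm_congr_ae (Lp.coeFn_sub (𝒢seq (n k) u) (𝒢 u)), Lp.norm_def,
        ENNReal.ofReal_toReal (Lp.eLpNorm_ne_top _)]
    simp only [heq]
    have := (ENNReal.continuous_ofReal.tendsto 0).comp hnconv
    simpa [Function.comp_def] using this
  have hmeas : TendstoInMeasure P (fun k => (𝒢seq (n k) u : Ω → Y)) atTop (𝒢 u : Ω → Y) :=
    tendstoInMeasure_of_tendsto_eLpNorm hq0
      (fun k => Lp.aestronglyMeasurable _) (Lp.aestronglyMeasurable _) heLp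
  obtain ⟨ns, hns, hae⟩ := hmeas.exists_seq_tendsto_ae
  filter_upwards [hae, hGlim, ae_all_iff.2 fun k => hGf (n k) u] with ω h1 h2 h3
  have h2' : Tendsto (fun i => Gf (n (ns i)) ω) atTop (𝓝 (G ω)) :=
    h2.comp hns.tendsto_atTop
  have h4 : Tendsto (fun i => Gf (n (ns i)) ω (u ω)) atTop (𝓝 (G ω (u ω))) :=
    ((ContinuousLinearMap.apply ℝ Y ((u : Ω → X) ω)).continuous.tendsto (G ω)).comp h2'
  have h1' : Tendsto (fun i => Gf (n (ns i)) ω (u ω)) atTop (𝓝 ((𝒢 u) ω)) := by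
    have : (fun i => Gf (n (ns i)) ω ((u : Ω → X) ω)) =
        fun i => (𝒢seq (n (ns i)) u) ω := by
      funext i; rw [h3 (ns i)]
    rw [this]
    exact h1
  exact tendsto_nhds_unique h1' h4

end Aux

set_option synthInstance.maxHeartbeats 1000000

/-- The set of pointwisely defined bounded linear operators from
`L^{p₁}(Ω;X)` to `L^{q₁}(Ω;Y)` is a closed linear subspace of the Banach space of
all bounded linear operators; in particular an operator-norm limit of pointwisely
defined operators is pointwisely defined. -/
theorem statement6 {Ω : Type*} [MeasurableSpace Ω] (P : Measure Ω) [IsProbabilityMeasure P]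
    {X Y : Type*}
    [NormedAddCommGroup X] [NormedSpace ℝ X] [CompleteSpace X]
    [TopologicalSpace.SeparableSpace X]
    [NormedAddCommGroup Y] [NormedSpace ℝ Y] [CompleteSpace Y]
    (hYrefl : Function.Surjective (NormedSpace.inclusionInDoubleDual ℝ Y))
    [TopologicalSpace.SeparableSpace (Lp ℝ 1 P)]
    (p₁ q₁ : ℝ≥0∞) [Fact (1 ≤ p₁)] [Fact (1 ≤ q₁)]
    (hp₁ : p₁ ≠ ⊤) (hq₁ : 1 < q₁) (hq₁' : q₁ ≠ ⊤) :
    (∃ S : Submodule ℝ (Lp X p₁ P →L[ℝ] Lp Y q₁ P),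
      (S : Set (Lp X p₁ P →L[ℝ] Lp Y q₁ P)) =
        {𝒢 | PointwiselyDefined P p₁ q₁ 𝒢} ∧
      IsClosed (S : Set (Lp X p₁ P →L[ℝ] Lp Y q₁ P))) ∧
    ∀ (𝒢seq : ℕ → (Lp X p₁ P →L[ℝ] Lp Y q₁ P)) (𝒢 : Lp X p₁ P →L[ℝ] Lp Y q₁ P),
      (∀ n, PointwiselyDefined P p₁ q₁ (𝒢seq n)) →
      Tendsto 𝒢seq atTop (𝓝 𝒢) →
      PointwiselyDefined P p₁ q₁ 𝒢 := by
  have h_add : ∀ {a b : Lp X p₁ P →L[ℝ] Lp Y q₁ P},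
      PointwiselyDefined P p₁ q₁ a → PointwiselyDefined P p₁ q₁ b →
      PointwiselyDefined P p₁ q₁ (a + b) := by
    rintro a b ⟨Ga, ha⟩ ⟨Gb, hb⟩
    refine ⟨fun ω => Ga ω + Gb ω, fun u => ?_⟩
    filter_upwards [ha u, hb u, Lp.coeFn_add (a u) (b u)] with ω h1 h2 h3
    rw [ContinuousLinearMap.add_apply, h3, Pi.add_apply, h1, h2,
      ContinuousLinearMap.add_apply]
  have h_zero : PointwiselyDefined P p₁ q₁ (0 : Lp X p₁ P →L[ℝ] Lp Y q₁ P) := by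
    refine ⟨fun _ => 0, fun u => ?_⟩
    filter_upwards [Lp.coeFn_zero Y q₁ P] with ω h
    rw [ContinuousLinearMap.zero_apply, h]
    simp
  have h_smul : ∀ (c : ℝ) {a : Lp X p₁ P →L[ℝ] Lp Y q₁ P},
      PointwiselyDefined P p₁ q₁ a → PointwiselyDefined P p₁ q₁ (c • a) := by
    rintro c a ⟨Ga, ha⟩
    refine ⟨fun ω => c • Ga ω, fun u => ?_⟩
    filter_upwards [ha u, Lp.coeFn_smul c (a u)] with ω h1 h2
    rw [ContinuousLinearMap.smul_apply, h2, Pi.smul_apply, h1,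
      ContinuousLinearMap.smul_apply]
  constructor
  · refine ⟨⟨⟨⟨{𝒢 | PointwiselyDefined P p₁ q₁ 𝒢}, fun ha hb => h_add ha hb⟩, h_zero⟩,
      fun c {x} hx => h_smul c hx⟩, rfl, ?_⟩
    apply IsSeqClosed.isClosed
    intro f g hf hg
    exact pd_limit hp₁ hq₁' f g hf hg
  · exact fun 𝒢seq 𝒢 h1 h2 => pd_limit hp₁ hq₁' 𝒢seq 𝒢 h1 h2

end
end

section
/- Let H₁ be a complex Hilbert space and U a nonempty subset of H₁. Let T > 0 and let (Ω,𝔉,P) be a complete probability space equipped with a filtration 𝔽 = (𝔉_t)_{t∈[0,T]}. Let F ∈ L²_𝔽(0,T;H₁), i.e. F : [0,T]×Ω → H₁ is jointly measurable, 𝔽-adapted and E∫_0^T ‖F(t)‖_{H₁}² dt < ∞, and let ū : [0,T]×Ω → U be a jointly measurable 𝔽-adapted process. Suppose that for every jointly measurable 𝔽-adapted U-valued process u with u − ū ∈ L²_𝔽(0,T;L²(Ω;H₁)) one has Re E∫_0^T ⟨F(t), u(t) − ū(t)⟩_{H₁} dt ≤ 0. Then for every point u ∈ U, the pointwise inequality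 Re⟨F(t,ω), u − ū(t,ω)⟩_{H₁} ≤ 0 holds for almost every (t,ω) ∈ [0,T]×Ω. -/
open MeasureTheory Filter Topology
open scoped ENNReal

/-- From an integral variational inequality to a pointwise one:
if `Re E∫_0^T ⟨F(t), u(t) − ū(t)⟩ dt ≤ 0` for every adapted `U`-valued process `u`
with `u − ū ∈ L²`, then for every `u ∈ U`,
`Re⟨F(t,ω), u − ū(t,ω)⟩ ≤ 0` for a.e. `(t,ω) ∈ [0,T] × Ω`. -/
theorem statement10 {Ω : Type*} [mΩ : MeasurableSpace Ω] (P : Measure Ω)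
    [IsProbabilityMeasure P] [P.IsComplete]
    {H₁ : Type*} [NormedAddCommGroup H₁] [InnerProductSpace ℂ H₁] [CompleteSpace H₁]
    (U : Set H₁) (hU : U.Nonempty)
    (T : ℝ) (hT : 0 < T) (𝔽 : Filtration ℝ mΩ)
    (F : ℝ → Ω → H₁)
    (hFmeas : StronglyMeasurable (Function.uncurry F))
    (hFad : ∀ t : ℝ, StronglyMeasurable[𝔽 t] (F t))
    (hFint : (∫⁻ t in Set.Icc (0 : ℝ) T, ∫⁻ ω, (‖F t ω‖₊ : ℝ≥0∞) ^ (2 : ℝ) ∂P) < ⊤)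
    (ubar : ℝ → Ω → H₁)
    (hubarmeas : StronglyMeasurable (Function.uncurry ubar))
    (hubarad : ∀ t : ℝ, StronglyMeasurable[𝔽 t] (ubar t))
    (hubarU : ∀ t ω, ubar t ω ∈ U)
    (hopt : ∀ u : ℝ → Ω → H₁,
      StronglyMeasurable (Function.uncurry u) →
      (∀ t : ℝ, StronglyMeasurable[𝔽 t] (u t)) →
      (∀ t ω, u t ω ∈ U) →
      (∫⁻ t in Set.Icc (0 : ℝ) T, ∫⁻ ω, (‖u t ω - ubar t ω‖₊ : ℝ≥0∞) ^ (2 : ℝ) ∂P) < ⊤ →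
      (∫ t in Set.Icc (0 : ℝ) T, ∫ ω, (inner ℂ (F t ω) (u t ω - ubar t ω) : ℂ) ∂P).re ≤ 0) :
    ∀ u₀ ∈ U, ∀ᵐ tω ∂((volume.restrict (Set.Icc (0 : ℝ) T)).prod P),
      (inner ℂ (F tω.1 tω.2) (u₀ - ubar tω.1 tω.2) : ℂ).re ≤ 0 := by
  classical
  intro u₀ hu₀
  set ν : Measure ℝ := volume.restrict (Set.Icc (0 : ℝ) T) with hν
  set μ : Measure (ℝ × Ω) := ν.prod P with hμdef
  haveI : IsFiniteMeasure ν := by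
    constructor
    rw [hν, Measure.restrict_apply_univ]
    exact measure_Icc_lt_top
  haveI : IsFiniteMeasure μ := by rw [hμdef]; infer_instance
  -- strong measurability of the basic inner product
  have hinner0 : StronglyMeasurable
      (fun tω : ℝ × Ω => (inner ℂ (F tω.1 tω.2) (u₀ - ubar tω.1 tω.2) : ℂ)) :=
    hFmeas.inner (stronglyMeasurable_const.sub hubarmeas)
  -- F is integrable on the product
  have hF2meas : Measurable (fun tω : ℝ × Ω => (‖F tω.1 tω.2‖₊ : ℝ≥0∞) ^ (2 : ℝ)) :=
    hFmeas.enorm.pow_const _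
  have hFprod : (∫⁻ tω, (‖F tω.1 tω.2‖₊ : ℝ≥0∞) ^ (2 : ℝ) ∂μ) < ⊤ := by
    rw [hμdef, lintegral_prod _ hF2meas.aemeasurable]
    exact hFint
  have hFmem : MemLp (fun tω : ℝ × Ω => F tω.1 tω.2) 2 μ := by
    refine ⟨hFmeas.aestronglyMeasurable, ?_⟩
    rw [eLpNorm_eq_lintegral_rpow_enorm_toReal (by norm_num) (by norm_num)]
    simp only [ENNReal.toReal_ofNat]
    exact ENNReal.rpow_lt_top_of_nonneg (by norm_num) hFprod.ne
  have hFint1 : Integrable (fun tω : ℝ × Ω => F tω.1 tω.2) μ :=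
    hFmem.integrable (by norm_num)
  -- the key lemma for each n
  have key : ∀ n : ℕ, ∀ᵐ tω ∂μ,
      ¬ (0 < (inner ℂ (F tω.1 tω.2) (u₀ - ubar tω.1 tω.2) : ℂ).re ∧
          ‖u₀ - ubar tω.1 tω.2‖ ≤ n) := by
    intro n
    set p : ℝ → Ω → Prop := fun t ω =>
      0 < (inner ℂ (F t ω) (u₀ - ubar t ω) : ℂ).re ∧ ‖u₀ - ubar t ω‖ ≤ n with hp
    set u : ℝ → Ω → H₁ := fun t ω => if p t ω then u₀ else ubar t ω with hu
    have hsu : MeasurableSet {tω : ℝ × Ω | p tω.1 tω.2} := by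
      apply MeasurableSet.inter
      · exact measurableSet_lt measurable_const
          ((Complex.measurable_re.comp hinner0.measurable))
      · exact measurableSet_le
          (stronglyMeasurable_const.sub hubarmeas).norm.measurable measurable_const
    have humeas : StronglyMeasurable (Function.uncurry u) := by
      have : Function.uncurry u = fun tω : ℝ × Ω =>
          if p tω.1 tω.2 then u₀ else Function.uncurry ubar tω := rfl
      rw [this]
      exact StronglyMeasurable.ite hsu stronglyMeasurable_const hubarmeas
    have huad : ∀ t : ℝ, StronglyMeasurable[𝔽 t] (u t) := by
      intro t
      have hst : MeasurableSet[𝔽 t] {ω | p t ω} := by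
        apply MeasurableSet.inter
        · exact measurableSet_lt measurable_const
            (Complex.measurable_re.comp
              ((hFad t).inner (stronglyMeasurable_const.sub (hubarad t))).measurable)
        · exact measurableSet_le
            (stronglyMeasurable_const.sub (hubarad t)).norm.measurable measurable_const
      exact StronglyMeasurable.ite hst stronglyMeasurable_const (hubarad t)
    have huU : ∀ t ω, u t ω ∈ U := by
      intro t ω
      by_cases h : p t ω
      · rw [hu]; simp only [if_pos h]; exact hu₀
      · rw [hu]; simp only [if_neg h]; exact hubarU t ω
    have hbound : ∀ t ω, ‖u t ω - ubar t ω‖ ≤ n := by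
      intro t ω
      by_cases h : p t ω
      · rw [hu]; simp only [if_pos h]; exact h.2
      · rw [hu]; simp only [if_neg h, sub_self, norm_zero]; exact Nat.cast_nonneg n
    have hul2 : (∫⁻ t in Set.Icc (0 : ℝ) T,
        ∫⁻ ω, (‖u t ω - ubar t ω‖₊ : ℝ≥0∞) ^ (2 : ℝ) ∂P) < ⊤ := by
      calc (∫⁻ t in Set.Icc (0 : ℝ) T, ∫⁻ ω, (‖u t ω - ubar t ω‖₊ : ℝ≥0∞) ^ (2 : ℝ) ∂P)
          ≤ ∫⁻ _ in Set.Icc (0 : ℝ) T, ∫⁻ _, ((n : ℝ≥0∞)) ^ (2 : ℝ) ∂P := by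
            refine lintegral_mono fun t => lintegral_mono fun ω => ?_
            refine ENNReal.rpow_le_rpow ?_ (by norm_num)
            rw [← ENNReal.coe_natCast, ENNReal.coe_le_coe, ← NNReal.coe_le_coe]
            simpa using hbound t ω
        _ < ⊤ := by
            rw [lintegral_const, lintegral_const]
            simp only [measure_univ, mul_one, Measure.restrict_apply_univ]
            exact ENNReal.mul_lt_top (ENNReal.rpow_lt_top_of_nonneg (by norm_num)
              (ENNReal.natCast_ne_top n)) measure_Icc_lt_top
    -- integrand
    set g : ℝ × Ω → ℂ := fun tω => (inner ℂ (F tω.1 tω.2) (u tω.1 tω.2 - ubar tω.1 tω.2) : ℂ)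
      with hg
    have hgeq : ∀ tω : ℝ × Ω, g tω =
        if p tω.1 tω.2 then (inner ℂ (F tω.1 tω.2) (u₀ - ubar tω.1 tω.2) : ℂ) else 0 := by
      intro tω
      by_cases h : p tω.1 tω.2
      · rw [hg]; simp only [hu, if_pos h]
      · rw [hg]; simp only [hu, if_neg h, sub_self, inner_zero_right]
    have hgmeas : AEStronglyMeasurable g μ :=
      (hFmeas.inner ((humeas.sub hubarmeas))).aestronglyMeasurable
    have hgint : Integrable g μ := by
      refine Integrable.mono' ((hFint1.norm).mul_const n) hgmeas ?_
      refine Eventually.of_forall fun tω => ?_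
      calc ‖g tω‖ ≤ ‖F tω.1 tω.2‖ * ‖u tω.1 tω.2 - ubar tω.1 tω.2‖ := norm_inner_le_norm _ _
        _ ≤ ‖F tω.1 tω.2‖ * n := by
            gcongr
            exact hbound _ _
    -- apply hopt and Fubini
    have h1 : (∫ tω, g tω ∂μ).re ≤ 0 := by
      rw [hμdef, integral_prod g hgint]
      exact hopt u humeas huad huU hul2
    have h2 : ∫ tω, (g tω).re ∂μ ≤ 0 := by
      have := integral_re (𝕜 := ℂ) hgint
      simpa [RCLike.re_to_complex] using this.le.trans h1
    have hnonneg : (0 : ℝ × Ω → ℝ) ≤ fun tω => (g tω).re := by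
      intro tω
      show (0 : ℝ) ≤ (g tω).re
      rw [hgeq]
      by_cases h : p tω.1 tω.2
      · rw [if_pos h]; exact h.1.le
      · rw [if_neg h]; exact le_rfl
    have hzero : (fun tω => (g tω).re) =ᵐ[μ] 0 := by
      rw [← integral_eq_zero_iff_of_nonneg hnonneg (Integrable.re hgint)]
      exact le_antisymm h2 (integral_nonneg hnonneg)
    filter_upwards [hzero] with tω htω hcontra
    have : (g tω).re = (inner ℂ (F tω.1 tω.2) (u₀ - ubar tω.1 tω.2) : ℂ).re := by
      rw [hgeq, if_pos hcontra]
    rw [htω] at this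
    exact absurd this.symm (ne_of_gt hcontra.1)
  have hall := ae_all_iff.2 key
  filter_upwards [hall] with tω h
  by_contra hpos
  push_neg at hpos
  obtain ⟨n, hn⟩ := exists_nat_ge ‖u₀ - ubar tω.1 tω.2‖
  exact h n ⟨hpos, hn⟩
end

section
/- Let H be a separable Hilbert space, T > 0, and let (Ω,𝔉,P) be a complete probability space equipped with a filtration 𝔽 = (𝔉_t)_{t∈[0,T]}. Let S : ℝ → ℒ(H) be a strongly continuous one-parameter group of bounded linear operators on H (S(0) = I, S(t+s) = S(t)S(s) for all s,t ∈ ℝ, and t ↦ S(t)x is continuous for each x ∈ H). Let y ∈ L^1(Ω,𝔉_T,P;H) and let f be a simple 𝔽-adapted process of the form f(t,ω) = Σ_{j=1}^{L} Σ_{k=1}^{M_j} α_{j,k} χ_{Ω_{j,k}}(ω) χ_{[t_j,t_{j+1})}(t), where L, M_j ∈ ℕ, α_{j,k} ∈ H, 0 = t_1 < t_2 < ⋯ < t_{L+1} = T, Ω_{j,k} ∈ 𝔉_{t_j}, and for each j the sets (Ω_{j,k})_{k=1}^{M_j} form a partition of Ω. For t ∈ [0,T] define ξ^t := E( S(T−t)y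 − ∫_t^T S(s−t) f(s) ds | 𝔉_t ) and X(t) := S(t)ξ^t − ∫_0^t S(s) f(s) ds. Then (X(t))_{t∈[0,T]} is an H-valued (𝔉_t)-martingale: X(t) is integrable and 𝔉_t-measurable for each t, and for all 0 ≤ τ₁ ≤ τ₂ ≤ T, E(X(τ₂) | 𝔉_{τ₁}) = X(τ₁) P-almost surely. -/
open MeasureTheory Filter Topology
open scoped ENNReal

set_option maxHeartbeats 1000000 in
/-- Conditional expectation commutes with a continuous linear map. -/
lemma condexp_clm_comm' {α E : Type*} {m m0 : MeasurableSpace α} {μ : Measure α}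
    {𝕜 : Type*} [RCLike 𝕜]
    [NormedAddCommGroup E] [NormedSpace ℝ E] [NormedSpace 𝕜 E] [CompleteSpace E]
    (hm : m ≤ m0) [IsFiniteMeasure μ] (A : E →L[𝕜] E) {f : α → E}
    (hf : Integrable f μ) :
    μ[fun ω => A (f ω)|m] =ᵐ[μ] fun ω => A ((μ[f|m]) ω) := by
  refine (ae_eq_condExp_of_forall_setIntegral_eq hm (A.integrable_comp hf)
    (fun s _ _ => (A.integrable_comp integrable_condExp).integrableOn)
    (fun s hs hμs => ?_)
    ((A.continuous.comp_stronglyMeasurable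
      stronglyMeasurable_condExp).aestronglyMeasurable)).symm
  calc ∫ x in s, A ((μ[f|m]) x) ∂μ
      = A (∫ x in s, (μ[f|m]) x ∂μ) :=
        A.integral_comp_comm integrable_condExp.integrableOn
    _ = A (∫ x in s, f x ∂μ) := by rw [setIntegral_condExp hm hf hs]
    _ = ∫ x in s, A (f x) ∂μ := by
        rw [A.integral_comp_comm (hf.integrableOn : IntegrableOn f s μ)]

/-- Let `S` be a strongly continuous group of bounded operators on a
separable Hilbert space `H`, `y ∈ L¹(Ω,𝔉_T,P;H)` and `f` a simple adapted process.
Setting `ξ^t = E(S(T−t)y − ∫_t^T S(s−t) f(s) ds | 𝔉_t)` and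
`X(t) = S(t)ξ^t − ∫_0^t S(s) f(s) ds`, the process `X` is an `H`-valued
`(𝔉_t)`-martingale on `[0,T]`. -/
theorem statement11 {Ω : Type*} [mΩ : MeasurableSpace Ω] (P : Measure Ω)
    [IsProbabilityMeasure P] [P.IsComplete]
    {H : Type*} [NormedAddCommGroup H] [InnerProductSpace ℂ H] [CompleteSpace H]
    [TopologicalSpace.SeparableSpace H]
    (T : ℝ) (hT : 0 < T) (𝔽 : Filtration ℝ mΩ)
    (S : ℝ → H →L[ℂ] H)
    (hS0 : S 0 = ContinuousLinearMap.id ℂ H)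
    (hSgrp : ∀ s t : ℝ, S (s + t) = (S s).comp (S t))
    (hScont : ∀ x : H, Continuous fun t : ℝ => S t x)
    (y : Ω → H) (hymeas : StronglyMeasurable[𝔽 T] y) (hyint : Integrable y P)
    (L : ℕ) (hL : 0 < L) (M : Fin L → ℕ)
    (tg : Fin (L + 1) → ℝ) (htg_mono : StrictMono tg)
    (htg0 : tg 0 = 0) (htgT : tg (Fin.last L) = T)
    (α : (j : Fin L) → Fin (M j) → H)
    (Oset : (j : Fin L) → Fin (M j) → Set Ω)
    (hOmeas : ∀ (j : Fin L) (k : Fin (M j)),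
      MeasurableSet[𝔽 (tg j.castSucc)] (Oset j k))
    (hOdisj : ∀ j : Fin L, Pairwise (Function.onFun Disjoint (Oset j)))
    (hOcover : ∀ j : Fin L, (⋃ k, Oset j k) = Set.univ)
    (f : ℝ → Ω → H)
    (hf : ∀ s ω, f s ω = ∑ j : Fin L, ∑ k : Fin (M j),
      Set.indicator ((Set.Ico (tg j.castSucc) (tg j.succ)) ×ˢ Oset j k)
        (fun _ => α j k) (s, ω))
    (ξ : ℝ → Ω → H)
    (hξ : ∀ t : ℝ, ξ t =
      P[(fun ω => S (T - t) (y ω) - ∫ s in Set.Ioc t T, S (s - t) (f s ω)) | 𝔽 t])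
    (X : ℝ → Ω → H)
    (hX : ∀ (t : ℝ) (ω : Ω), X t ω = S t (ξ t ω) - ∫ s in Set.Ioc (0 : ℝ) t, S s (f s ω)) :
    (∀ t ∈ Set.Icc (0 : ℝ) T, Integrable (X t) P ∧ StronglyMeasurable[𝔽 t] (X t)) ∧
    (∀ τ₁ τ₂ : ℝ, 0 ≤ τ₁ → τ₁ ≤ τ₂ → τ₂ ≤ T → P[X τ₂|𝔽 τ₁] =ᵐ[P] X τ₁) := by
  -- continuity of shifted orbits
  have hScont' : ∀ (t : ℝ) (x : H), Continuous fun s : ℝ => S (s - t) x := fun t x =>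
    (hScont x).comp (continuous_id.sub continuous_const)
  -- group law in applied form
  have hcomp : ∀ (t u : ℝ) (x : H), S t (S (u - t) x) = S u x := by
    intro t u x
    have h := hSgrp t (u - t)
    have h2 : t + (u - t) = u := by ring
    rw [h2] at h
    rw [h]; rfl
  -- pointwise representation of the integrand
  have hFrep : ∀ (t s : ℝ) (ω : Ω), S (s - t) (f s ω)
      = ∑ j : Fin L, ∑ k : Fin (M j),
          (Oset j k).indicator
            (fun _ => (Set.Ico (tg j.castSucc) (tg j.succ)).indicator
              (fun u => S (u - t) (α j k)) s) ω := by
    intro t s ω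
    rw [hf s ω, map_sum]
    refine Finset.sum_congr rfl fun j _ => ?_
    rw [map_sum]
    refine Finset.sum_congr rfl fun k _ => ?_
    by_cases hs : s ∈ Set.Ico (tg j.castSucc) (tg j.succ) <;>
      by_cases hω : ω ∈ Oset j k <;>
        simp [Set.indicator_apply, Set.mem_prod, hs, hω]
  -- integrability of each term in `s`
  have hterm : ∀ (t a b : ℝ) (ω : Ω) (j : Fin L) (k : Fin (M j)),
      IntegrableOn (fun s => (Oset j k).indicator
        (fun _ => (Set.Ico (tg j.castSucc) (tg j.succ)).indicator
          (fun u => S (u - t) (α j k)) s) ω) (Set.Ioc a b) volume := by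
    intro t a b ω j k
    by_cases hω : ω ∈ Oset j k
    · simp only [Set.indicator_of_mem hω]
      exact ((hScont' t (α j k)).integrableOn_Ioc).indicator measurableSet_Ico
    · simp only [Set.indicator_of_notMem hω]
      exact integrable_zero _ _ _
  -- pathwise integrability in `s`
  have hFint : ∀ (t a b : ℝ) (ω : Ω),
      IntegrableOn (fun s => S (s - t) (f s ω)) (Set.Ioc a b) volume := by
    intro t a b ω
    rw [show (fun s => S (s - t) (f s ω)) = _ from funext fun s => hFrep t s ω]
    exact integrable_finset_sum _ fun j _ => integrable_finset_sum _ fun k _ =>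
      hterm t a b ω j k
  have hFint0 : ∀ (a b : ℝ) (ω : Ω),
      IntegrableOn (fun s => S s (f s ω)) (Set.Ioc a b) volume := by
    intro a b ω
    have := hFint 0 a b ω
    simpa [sub_zero] using this
  -- representation of the time integral as a simple function of ω
  have hGrep : ∀ (t a b : ℝ) (ω : Ω),
      (∫ s in Set.Ioc a b, S (s - t) (f s ω))
        = ∑ j : Fin L, ∑ k : Fin (M j),
            (Oset j k).indicator
              (fun _ => ∫ s in Set.Ioc a b ∩ Set.Ico (tg j.castSucc) (tg j.succ),
                S (s - t) (α j k)) ω := by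
    intro t a b ω
    simp only [hFrep]
    rw [integral_finset_sum _ (fun j _ =>
      integrable_finset_sum _ (fun k _ => hterm t a b ω j k))]
    refine Finset.sum_congr rfl fun j _ => ?_
    rw [integral_finset_sum _ (fun k _ => hterm t a b ω j k)]
    refine Finset.sum_congr rfl fun k _ => ?_
    by_cases hω : ω ∈ Oset j k
    · simp only [Set.indicator_of_mem hω]
      exact setIntegral_indicator measurableSet_Ico
    · simp only [Set.indicator_of_notMem hω, integral_zero]
  have hGrep0 : ∀ (a b : ℝ) (ω : Ω),
      (∫ s in Set.Ioc a b, S s (f s ω))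
        = ∑ j : Fin L, ∑ k : Fin (M j),
            (Oset j k).indicator
              (fun _ => ∫ s in Set.Ioc a b ∩ Set.Ico (tg j.castSucc) (tg j.succ),
                S s (α j k)) ω := by
    intro a b ω
    have := hGrep 0 a b ω
    simpa [sub_zero] using this
  -- integrability over Ω of the time integrals
  have hGint : ∀ (t a b : ℝ),
      Integrable (fun ω => ∫ s in Set.Ioc a b, S (s - t) (f s ω)) P := by
    intro t a b
    rw [show (fun ω => ∫ s in Set.Ioc a b, S (s - t) (f s ω)) = _ from
      funext fun ω => hGrep t a b ω]
    refine integrable_finset_sum _ fun j _ => integrable_finset_sum _ fun k _ => ?_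
    exact (integrable_const _).indicator (𝔽.le _ _ (hOmeas j k))
  have hGint0 : ∀ (a b : ℝ),
      Integrable (fun ω => ∫ s in Set.Ioc a b, S s (f s ω)) P := by
    intro a b
    rw [show (fun ω => ∫ s in Set.Ioc a b, S s (f s ω)) = _ from
      funext fun ω => hGrep0 a b ω]
    refine integrable_finset_sum _ fun j _ => integrable_finset_sum _ fun k _ => ?_
    exact (integrable_const _).indicator (𝔽.le _ _ (hOmeas j k))
  -- 𝔽 t-measurability of ω ↦ ∫_0^t S s f(s,ω) ds
  have hGmeas : ∀ t : ℝ,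
      StronglyMeasurable[𝔽 t] fun ω => ∫ s in Set.Ioc (0 : ℝ) t, S s (f s ω) := by
    intro t
    rw [show (fun ω => ∫ s in Set.Ioc (0 : ℝ) t, S s (f s ω)) = _ from
      funext fun ω => hGrep0 0 t ω]
    refine Finset.stronglyMeasurable_fun_sum _ fun j _ => ?_
    refine Finset.stronglyMeasurable_fun_sum _ fun k _ => ?_
    by_cases hjt : tg j.castSucc < t
    · exact stronglyMeasurable_const.indicator (𝔽.mono hjt.le _ (hOmeas j k))
    · push_neg at hjt
      have hnull : volume (Set.Ioc (0 : ℝ) t ∩ Set.Ico (tg j.castSucc) (tg j.succ)) = 0 := by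
        refine measure_mono_null (fun s hs => ?_) (measure_singleton t)
        have h1 : s ≤ t := hs.1.2
        have h2 : tg j.castSucc ≤ s := hs.2.1
        have : s = t := le_antisymm h1 (le_trans hjt h2)
        simp [this]
      have hzero : (∫ s in Set.Ioc (0 : ℝ) t ∩ Set.Ico (tg j.castSucc) (tg j.succ),
          S s (α j k)) = 0 := by
        rw [Measure.restrict_eq_zero.mpr hnull, integral_zero_measure]
      rw [hzero]
      simpa using stronglyMeasurable_const (β := H) (b := 0)
  -- the terminal random variable
  set Z : Ω → H := fun ω => S T (y ω) - ∫ s in Set.Ioc (0 : ℝ) T, S s (f s ω) with hZ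
  have hZint : Integrable Z P := ((S T).integrable_comp hyint).sub (hGint0 0 T)
  -- the key identity : X t = E(Z | 𝔽 t) a.e. for t ∈ [0,T]
  have key : ∀ t : ℝ, 0 ≤ t → t ≤ T → X t =ᵐ[P] P[Z|𝔽 t] := by
    intro t h0t htT
    set big : Ω → H := fun ω => S T (y ω) - ∫ s in Set.Ioc t T, S s (f s ω) with hbigdef
    set G : Ω → H := fun ω => ∫ s in Set.Ioc (0 : ℝ) t, S s (f s ω) with hGdef
    have hbigint : Integrable big P := ((S T).integrable_comp hyint).sub (hGint0 t T)
    have hGint' : Integrable G P := hGint0 0 t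
    -- Step A : S t ∘ ξ t = E(big | 𝔽 t) a.e.
    have hYint : Integrable
        (fun ω => S (T - t) (y ω) - ∫ s in Set.Ioc t T, S (s - t) (f s ω)) P :=
      ((S (T - t)).integrable_comp hyint).sub (hGint t t T)
    have hA := condexp_clm_comm' (𝔽.le t) (S t) hYint
    have hbigeq : (fun ω => S t ((S (T - t) (y ω)) -
        ∫ s in Set.Ioc t T, S (s - t) (f s ω))) = big := by
      funext ω
      rw [map_sub, hcomp t T (y ω),
        ← ContinuousLinearMap.integral_comp_comm (S t) (hFint t t T ω)]
      simp only [hbigdef, hcomp]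
    have hSξ : (fun ω => S t (ξ t ω)) =ᵐ[P] P[big|𝔽 t] := by
      rw [hξ t, ← hbigeq]
      exact hA.symm
    -- Step B : E(Z|𝔽 t) = E(big|𝔽 t) - G a.e.
    have hsplit : ∀ ω : Ω, Z ω = big ω - G ω := by
      intro ω
      have hunion : Set.Ioc (0 : ℝ) t ∪ Set.Ioc t T = Set.Ioc (0 : ℝ) T :=
        Set.Ioc_union_Ioc_eq_Ioc h0t htT
      have := setIntegral_union (μ := volume) (f := fun s => S s (f s ω))
        (Set.Ioc_disjoint_Ioc_of_le le_rfl) measurableSet_Ioc (hFint0 0 t ω) (hFint0 t T ω)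
      rw [hunion] at this
      simp only [hZ, hbigdef, hGdef, this]
      abel
    have hZeq : Z = big - G := funext fun ω => by
      simp only [Pi.sub_apply]; exact hsplit ω
    have hstepB : P[Z|𝔽 t] =ᵐ[P] fun ω => (P[big|𝔽 t]) ω - G ω := by
      rw [hZeq]
      refine (condExp_sub hbigint hGint' _).trans ?_
      have hG : P[G|𝔽 t] = G :=
        condExp_of_stronglyMeasurable (𝔽.le t) (hGmeas t) hGint'
      rw [hG]
      rfl
    -- combine
    have hXae : X t =ᵐ[P] fun ω => (P[big|𝔽 t]) ω - G ω := by
      filter_upwards [hSξ] with ω hω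
      rw [hX t ω, hω]
    exact hXae.trans hstepB.symm
  refine ⟨fun t ht => ⟨?_, ?_⟩, fun τ₁ τ₂ h1 h12 h2T => ?_⟩
  · -- integrability of X t
    rw [show X t = fun ω => S t (ξ t ω) - ∫ s in Set.Ioc (0 : ℝ) t, S s (f s ω) from
      funext fun ω => hX t ω]
    have h1 : Integrable (fun ω => S t (ξ t ω)) P := by
      rw [hξ t]
      exact (S t).integrable_comp integrable_condExp
    exact h1.sub (hGint0 0 t)
  · -- 𝔽 t-measurability of X t
    rw [show X t = fun ω => S t (ξ t ω) - ∫ s in Set.Ioc (0 : ℝ) t, S s (f s ω) from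
      funext fun ω => hX t ω]
    have h1 : StronglyMeasurable[𝔽 t] fun ω => S t (ξ t ω) := by
      rw [hξ t]
      exact (S t).continuous.comp_stronglyMeasurable stronglyMeasurable_condExp
    exact h1.sub (hGmeas t)
  · -- martingale property
    have k1 := key τ₁ h1 (h12.trans h2T)
    have k2 := key τ₂ (h1.trans h12) h2T
    calc P[X τ₂|𝔽 τ₁] =ᵐ[P] P[P[Z|𝔽 τ₂]|𝔽 τ₁] := condExp_congr_ae k2
      _ =ᵐ[P] P[Z|𝔽 τ₁] := condExp_condExp_of_le (𝔽.mono h12) (𝔽.le τ₂)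
      _ =ᵐ[P] X τ₁ := k1.symm
end
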